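/- Consider the sequence q(ℓ+1) = max{-G(ℓ+1), q(ℓ) + G(ℓ+1)} (componentwise) with q(0) = max{-G(0), 0}, where G(ℓ) ∈ ℝ^p. Then for all ℓ ≥ 0, ⟨q(ℓ), G(ℓ+1)⟩ ≥ (1/2)(‖q(ℓ+1)‖² - ‖q(ℓ)‖²) - ‖G(ℓ+1)‖². -/
import Mathlib


open scoped RealInnerProductSpace

lemma aux_sq_max (a b : ℝ) : (max (-b) (a + b)) ^ 2 ≤ a ^ 2 + 2 * a * b + 2 * b ^ 2 := by
  rcases max_cases (-b) (a + b) with ⟨h, _⟩ | ⟨h, _⟩ <;> rw [h] <;> nlinarith [sq_nonneg (a + b), sq_nonneg b]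

/-- Virtual queue successive inequality:
`⟨q(ℓ), G(ℓ+1)⟩ ≥ (1/2)(‖q(ℓ+1)‖² - ‖q(ℓ)‖²) - ‖G(ℓ+1)‖²`. -/
theorem stmt_5 {p : ℕ} (q G : ℕ → EuclideanSpace ℝ (Fin p))
    (h0 : ∀ i, q 0 i = max (-(G 0 i)) 0)
    (hrec : ∀ ℓ i, q (ℓ + 1) i = max (-(G (ℓ + 1) i)) (q ℓ i + G (ℓ + 1) i)) :
    ∀ ℓ : ℕ,
      ⟪q ℓ, G (ℓ + 1)⟫ ≥
        (1 / 2) * (‖q (ℓ + 1)‖ ^ 2 - ‖q ℓ‖ ^ 2) - ‖G (ℓ + 1)‖ ^ 2 := by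
  intro ℓ
  have hnorm : ∀ x : EuclideanSpace ℝ (Fin p), ‖x‖ ^ 2 = ∑ i, (x i) ^ 2 := by
    intro x
    rw [EuclideanSpace.norm_eq, Real.sq_sqrt (Finset.sum_nonneg fun i _ => sq_nonneg _)]
    simp [Real.sqrt_sq_eq_abs, sq_abs]
  have hinner : ⟪q ℓ, G (ℓ + 1)⟫ = ∑ i, q ℓ i * G (ℓ + 1) i := by
    simp [PiLp.inner_apply, RCLike.inner_apply, mul_comm]
  have hkey : ∑ i, (q (ℓ + 1) i) ^ 2 ≤
      ∑ i, ((q ℓ i) ^ 2 + 2 * (q ℓ i) * (G (ℓ + 1) i) + 2 * (G (ℓ + 1) i) ^ 2) := by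
    apply Finset.sum_le_sum
    intro i _
    rw [hrec ℓ i]
    exact aux_sq_max _ _
  rw [hinner, hnorm, hnorm, hnorm]
  simp only [Finset.sum_add_distrib] at hkey
  rw [ge_iff_le]
  have h2 : ∑ i, 2 * (q ℓ i) * (G (ℓ + 1) i) = 2 * ∑ i, q ℓ i * G (ℓ + 1) i := by
    rw [Finset.mul_sum]; exact Finset.sum_congr rfl fun i _ => by ring
  have h3 : ∑ i, 2 * (G (ℓ + 1) i) ^ 2 = 2 * ∑ i, (G (ℓ + 1) i) ^ 2 := by
    rw [Finset.mul_sum]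
  rw [h2, h3] at hkey
  linarith
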